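/- Let γ > 0, n ≥ 1, and let ϖ, φ be natural numbers with 0 ≤ ϖ < n and φ ≥ 1. Then the Bayes factor of the zero-inflated negative binomial model against the negative binomial model, defined as the ratio of the ZINB marginal likelihood integral ∫₀^{1}∫₀^{∞} (α + (1 − α)(1 + κ/γ)^{−γ})^{ϖ}(1 − α)^{n−ϖ}(γ/(γ+κ))^{(n−ϖ)γ}(κ/(γ+κ))^{φ}·√(γ/(κ(γ+κ))) dκ dα to the NB marginal likelihood integral ∫₀^{∞} (γ/(γ+κ))^{nγ}(κ/(γ+κ))^{φ}·√(γ/(κ(γ+κ))) dκ, equals (ϖ!·Γ(φ + nγ + 1/2) / ((n+1)!·Γ(nγ))) · ∑_{j=0}^{ϖ} ((n−j)!·Γ((n−j)γ)) / ((ϖ−j)!·Γ(φ + (n−j)γ + 1/2)). -/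

import Mathlib

open Real Finset MeasureTheory


lemma betaCongr {a b : ℝ} : ∀ x ∈ Set.Ioo (0:ℝ) 1,
    (x:ℂ) ^ ((a:ℂ)-1) * ((1:ℂ)-(x:ℂ)) ^ ((b:ℂ)-1) = ((x ^ (a-1) * (1-x) ^ (b-1) : ℝ) : ℂ) := by
  rintro x ⟨hx0, hx1⟩
  have h1 : ((1:ℂ) - (x:ℂ)) = ((1 - x : ℝ) : ℂ) := by push_cast; ring
  have h2 : ((a:ℂ) - 1) = ((a - 1 : ℝ) : ℂ) := by push_cast; ring
  have h3 : ((b:ℂ) - 1) = ((b - 1 : ℝ) : ℂ) := by push_cast; ring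
  rw [h1, h2, h3, ← Complex.ofReal_cpow hx0.le, ← Complex.ofReal_cpow (by linarith),
    ← Complex.ofReal_mul]

lemma betaReal_intOn {a b : ℝ} (ha : 0 < a) (hb : 0 < b) :
    IntegrableOn (fun x : ℝ => x ^ (a-1) * (1-x) ^ (b-1)) (Set.Ioo 0 1) := by
  have h := Complex.betaIntegral_convergent (u := (a:ℂ)) (v := (b:ℂ)) (by simpa) (by simpa)
  have h2 : IntegrableOn (fun x : ℝ => (x:ℂ) ^ ((a:ℂ)-1) * ((1:ℂ)-(x:ℂ)) ^ ((b:ℂ)-1))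
      (Set.Ioo 0 1) := ((intervalIntegrable_iff_integrableOn_Ioo_of_le zero_le_one).mp h)
  have h3 : IntegrableOn (fun x : ℝ => ‖((x ^ (a-1) * (1-x) ^ (b-1) : ℝ) : ℂ)‖)
      (Set.Ioo 0 1) := (h2.congr_fun betaCongr measurableSet_Ioo).norm
  refine IntegrableOn.congr_fun h3 (fun x hx => ?_) measurableSet_Ioo
  have hx0 := hx.1; have hx1 := hx.2
  rw [Complex.norm_real, Real.norm_eq_abs, abs_of_nonneg (mul_nonneg (Real.rpow_nonneg hx0.le _) (Real.rpow_nonneg (by linarith) _))]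

lemma betaReal_eq {a b : ℝ} (ha : 0 < a) (hb : 0 < b) :
    ∫ x in Set.Ioo (0:ℝ) 1, x ^ (a-1) * (1-x) ^ (b-1)
      = Real.Gamma a * Real.Gamma b / Real.Gamma (a+b) := by
  have h := Complex.Gamma_mul_Gamma_eq_betaIntegral (s := (a:ℂ)) (t := (b:ℂ))
    (by simpa) (by simpa)
  have hB : Complex.betaIntegral a b = ((∫ x in Set.Ioo (0:ℝ) 1, x ^ (a-1) * (1-x) ^ (b-1) : ℝ) : ℂ) := by
    rw [Complex.betaIntegral, intervalIntegral.integral_of_le zero_le_one,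
      MeasureTheory.integral_Ioc_eq_integral_Ioo,
      setIntegral_congr_fun measurableSet_Ioo betaCongr]
    exact integral_ofReal
  rw [hB, ← Complex.ofReal_add, Complex.Gamma_ofReal, Complex.Gamma_ofReal,
    Complex.Gamma_ofReal, ← Complex.ofReal_mul, ← Complex.ofReal_mul] at h
  have h2 := Complex.ofReal_injective h
  have hpos : Real.Gamma (a+b) ≠ 0 := (Real.Gamma_pos_of_pos (by linarith)).ne'
  field_simp
  linarith [h2]

noncomputable def Jfun (γ : ℝ) (φ : ℕ) (a : ℝ) (κ : ℝ) : ℝ :=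
  (γ/(γ+κ))^a * (κ/(γ+κ))^φ * Real.sqrt (γ/(κ*(γ+κ)))

lemma f_deriv {γ : ℝ} (t : ℝ) (ht : t ∈ Set.Ioo (0:ℝ) 1) :
    HasDerivWithinAt (fun t : ℝ => γ*t/(1-t)) (γ/(1-t)^2) (Set.Ioo 0 1) t := by
  have h1t : (1:ℝ) - t ≠ 0 := by intro h; have := ht.2; linarith
  have h := (((hasDerivAt_id t).const_mul γ).div
    ((hasDerivAt_const t 1).sub (hasDerivAt_id t)) h1t)
  refine (h.hasDerivWithinAt).congr_deriv ?_
  simp only [Pi.sub_apply, id]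
  ring

lemma f_inj {γ : ℝ} (hγ : 0 < γ) : Set.InjOn (fun t : ℝ => γ*t/(1-t)) (Set.Ioo 0 1) := by
  rintro s ⟨hs0, hs1⟩ t ⟨ht0, ht1⟩ h
  simp only at h
  have h1s : (1:ℝ) - s ≠ 0 := by intro h; linarith
  have h1t : (1:ℝ) - t ≠ 0 := by intro h; linarith
  field_simp at h
  nlinarith

lemma f_image {γ : ℝ} (hγ : 0 < γ) :
    (fun t : ℝ => γ*t/(1-t)) '' (Set.Ioo 0 1) = Set.Ioi 0 := by
  ext y
  constructor
  · rintro ⟨t, ⟨ht0, ht1⟩, rfl⟩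
    have h1t : (0:ℝ) < 1 - t := by linarith
    exact div_pos (by positivity) h1t
  · intro hy
    have hy' : (0:ℝ) < y := hy
    refine ⟨y/(γ+y), ⟨by positivity, ?_⟩, ?_⟩
    · rw [div_lt_one (by linarith)]; linarith
    · have h1 : γ + y ≠ 0 := by positivity
      field_simp
      rw [add_sub_cancel_right, div_self hγ.ne']

lemma key_pointwise {γ : ℝ} (hγ : 0 < γ) (φ : ℕ) (a : ℝ) (t : ℝ)
    (ht : t ∈ Set.Ioo (0:ℝ) 1) :
    |γ/(1-t)^2| • Jfun γ φ a (γ*t/(1-t))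
      = Real.sqrt γ * (t ^ ((φ:ℝ)+1/2-1) * (1-t)^(a-1)) := by
  obtain ⟨ht0, ht1⟩ := ht
  have h1t : (0:ℝ) < 1 - t := by linarith
  set κ := γ*t/(1-t) with hκdef
  have hκ : 0 < κ := div_pos (by positivity) h1t
  have hsum : γ + κ = γ/(1-t) := by rw [hκdef]; field_simp; ring
  have e2 : γ/(γ+κ) = 1-t := by rw [hsum]; field_simp
  have e3 : κ/(γ+κ) = t := by rw [hsum, hκdef]; field_simp
  have e4 : κ*(γ+κ) = γ^2*t/(1-t)^2 := by rw [hsum, hκdef]; field_simp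
  have e1 : Real.sqrt (γ/(κ*(γ+κ))) = (1-t)/(Real.sqrt γ * Real.sqrt t) := by
    rw [e4, show γ/(γ^2*t/(1-t)^2) = (1-t)^2/(γ*t) by field_simp,
      Real.sqrt_div (sq_nonneg _), Real.sqrt_sq h1t.le, Real.sqrt_mul hγ.le]
  have hsγ : (0:ℝ) < Real.sqrt γ := Real.sqrt_pos.mpr hγ
  have hst : (0:ℝ) < Real.sqrt t := Real.sqrt_pos.mpr ht0
  rw [smul_eq_mul, Jfun, e2, e3, e1, abs_of_pos (by positivity),
    show (φ:ℝ)+1/2-1 = (φ:ℝ) - 1/2 by ring, Real.rpow_sub ht0,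
    Real.rpow_natCast, Real.rpow_sub h1t, Real.rpow_one,
    show ((1:ℝ)/2 : ℝ) = (1/2 : ℝ) from rfl, ← Real.sqrt_eq_rpow]
  have hγq : Real.sqrt γ * Real.sqrt γ = γ := Real.mul_self_sqrt hγ.le
  field_simp
  ring_nf
  rw [Real.sq_sqrt hγ.le]

lemma J_intOn {γ : ℝ} (hγ : 0 < γ) (φ : ℕ) {a : ℝ} (ha : 0 < a) :
    IntegrableOn (Jfun γ φ a) (Set.Ioi 0) := by
  rw [← f_image hγ,
    integrableOn_image_iff_integrableOn_abs_deriv_smul measurableSet_Ioo f_deriv (f_inj hγ)]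
  have h : IntegrableOn (fun t : ℝ => Real.sqrt γ * (t ^ ((φ:ℝ)+1/2-1) * (1-t)^(a-1)))
      (Set.Ioo 0 1) := (betaReal_intOn (by positivity) ha).const_mul _
  exact h.congr_fun (fun t ht => (key_pointwise hγ φ a t ht).symm) measurableSet_Ioo

lemma J_eq {γ : ℝ} (hγ : 0 < γ) (φ : ℕ) {a : ℝ} (ha : 0 < a) :
    ∫ κ in Set.Ioi (0:ℝ), Jfun γ φ a κ
      = Real.sqrt γ * (Real.Gamma ((φ:ℝ)+1/2) * Real.Gamma a
          / Real.Gamma ((φ:ℝ) + a + 1/2)) := by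
  rw [← f_image hγ,
    integral_image_eq_integral_abs_deriv_smul measurableSet_Ioo f_deriv (f_inj hγ),
    setIntegral_congr_fun measurableSet_Ioo (key_pointwise hγ φ a),
    MeasureTheory.integral_const_mul, betaReal_eq (by positivity : (0:ℝ) < (φ:ℝ)+1/2) ha,
    show (φ:ℝ)+1/2+a = (φ:ℝ)+a+1/2 by ring]

lemma integrand_expand {γ : ℝ} (hγ : 0 < γ) (α : ℝ) (n ϖ φ : ℕ) (hϖ : ϖ < n) :
    ∀ κ ∈ Set.Ioi (0:ℝ),
    (α + (1 - α) * (1 + κ / γ) ^ (-γ)) ^ ϖ * (1 - α) ^ (n - ϖ) *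
          (γ / (γ + κ)) ^ (((n - ϖ : ℕ) : ℝ) * γ) * (κ / (γ + κ)) ^ φ *
          Real.sqrt (γ / (κ * (γ + κ)))
      = ∑ j ∈ Finset.range (ϖ+1),
          ((ϖ.choose j : ℝ) * α^j * (1-α)^(n-j)) * Jfun γ φ (((n-j : ℕ) : ℝ)*γ) κ := by
  intro κ hκ
  have hκ0 : (0:ℝ) < κ := hκ
  have hγκ : (0:ℝ) < γ + κ := by linarith
  have hb : (0:ℝ) < γ/(γ+κ) := by positivity
  have hc : (1 + κ/γ) ^ (-γ) = (γ/(γ+κ))^γ := by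
    rw [show 1 + κ/γ = (γ+κ)/γ by field_simp,
      Real.rpow_neg (by positivity), ← Real.inv_rpow (by positivity), inv_div]
  rw [hc, add_pow, Finset.sum_mul, Finset.sum_mul, Finset.sum_mul, Finset.sum_mul]
  refine Finset.sum_congr rfl fun j hj => ?_
  have hjϖ : j ≤ ϖ := Nat.lt_succ_iff.mp (Finset.mem_range.mp hj)
  have hjn : j ≤ n := le_trans hjϖ hϖ.le
  have e : ((1-α) * (γ/(γ+κ))^γ) ^ (ϖ-j)
      = (1-α)^(ϖ-j) * (γ/(γ+κ)) ^ (γ * ((ϖ-j : ℕ) : ℝ)) := by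
    rw [mul_pow, ← Real.rpow_natCast ((γ/(γ+κ))^γ) (ϖ-j), ← Real.rpow_mul hb.le]
  have key : (γ/(γ+κ)) ^ (((n-j:ℕ):ℝ)*γ)
      = (γ/(γ+κ)) ^ (γ*((ϖ-j:ℕ):ℝ)) * (γ/(γ+κ)) ^ (((n-ϖ:ℕ):ℝ)*γ) := by
    rw [← Real.rpow_add hb]
    congr 1
    rw [Nat.cast_sub hjn, Nat.cast_sub hjϖ, Nat.cast_sub hϖ.le]
    ring
  have key2 : ((1-α):ℝ)^(n-j) = (1-α)^(ϖ-j) * (1-α)^(n-ϖ) := by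
    rw [← pow_add]; congr 1; omega
  rw [e, Jfun, key, key2]
  ring

lemma inner_eq {γ : ℝ} (hγ : 0 < γ) (α : ℝ) (n ϖ φ : ℕ) (hϖ : ϖ < n) :
    (∫ κ in Set.Ioi (0:ℝ),
        (α + (1 - α) * (1 + κ / γ) ^ (-γ)) ^ ϖ * (1 - α) ^ (n - ϖ) *
          (γ / (γ + κ)) ^ (((n - ϖ : ℕ) : ℝ) * γ) * (κ / (γ + κ)) ^ φ *
          Real.sqrt (γ / (κ * (γ + κ))))
      = ∑ j ∈ Finset.range (ϖ+1),
          ((ϖ.choose j : ℝ) * α^j * (1-α)^(n-j)) *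
            (Real.sqrt γ * (Real.Gamma ((φ:ℝ)+1/2) * Real.Gamma (((n-j:ℕ):ℝ)*γ)
              / Real.Gamma ((φ:ℝ) + ((n-j:ℕ):ℝ)*γ + 1/2))) := by
  have hpos : ∀ j ∈ Finset.range (ϖ+1), (0:ℝ) < ((n-j:ℕ):ℝ)*γ := by
    intro j hj
    have : 0 < n - j := by have := Finset.mem_range.mp hj; omega
    positivity
  rw [setIntegral_congr_fun measurableSet_Ioi (integrand_expand hγ α n ϖ φ hϖ),
    MeasureTheory.integral_finset_sum _ (fun j hj =>
      ((J_intOn hγ φ (hpos j hj)).const_mul _))]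
  exact Finset.sum_congr rfl fun j hj => by
    rw [MeasureTheory.integral_const_mul, J_eq hγ φ (hpos j hj)]

lemma alpha_integral (j m : ℕ) :
    ∫ α in Set.Ioo (0:ℝ) 1, α^j * (1-α)^m
      = (j.factorial : ℝ) * (m.factorial : ℝ) / ((j+m+1).factorial : ℝ) := by
  have h : ∫ α in Set.Ioo (0:ℝ) 1, α^j * (1-α)^m
      = ∫ α in Set.Ioo (0:ℝ) 1, α ^ (((j:ℝ)+1)-1) * (1-α) ^ (((m:ℝ)+1)-1) := by
    refine setIntegral_congr_fun measurableSet_Ioo fun x hx => ?_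
    rw [show ((j:ℝ)+1)-1 = (j:ℝ) by ring, show ((m:ℝ)+1)-1 = (m:ℝ) by ring,
      Real.rpow_natCast, Real.rpow_natCast]
  rw [h, betaReal_eq (by positivity) (by positivity),
    show ((j:ℝ)+1) + ((m:ℝ)+1) = ((j+m+1 : ℕ):ℝ) + 1 by push_cast; ring,
    Real.Gamma_nat_eq_factorial, Real.Gamma_nat_eq_factorial, Real.Gamma_nat_eq_factorial]

/-- The Bayes factor of the zero-inflated negative binomial model against the negative
binomial model (the ratio of the ZINB marginal likelihood integral to the NB marginal
likelihood integral, both under the Jeffreys-type prior `√(γ/(κ(γ+κ)))`, with a uniform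
prior on the zero-inflation parameter) equals
`(ϖ!·Γ(φ + nγ + 1/2)/((n+1)!·Γ(nγ))) · ∑_{j=0}^{ϖ} ((n−j)!·Γ((n−j)γ))/((ϖ−j)!·Γ(φ + (n−j)γ + 1/2))`. -/
theorem zinb_vs_nb_bayes_factor (γ : ℝ) (hγ : 0 < γ) (n ϖ φ : ℕ) (hn : 1 ≤ n)
    (hϖ : ϖ < n) (hφ : 1 ≤ φ) :
    (∫ α in Set.Ioo (0 : ℝ) 1, ∫ κ in Set.Ioi (0 : ℝ),
        (α + (1 - α) * (1 + κ / γ) ^ (-γ)) ^ ϖ * (1 - α) ^ (n - ϖ) *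
          (γ / (γ + κ)) ^ (((n - ϖ : ℕ) : ℝ) * γ) * (κ / (γ + κ)) ^ φ *
          Real.sqrt (γ / (κ * (γ + κ)))) /
      (∫ κ in Set.Ioi (0 : ℝ),
        (γ / (γ + κ)) ^ ((n : ℝ) * γ) * (κ / (γ + κ)) ^ φ *
          Real.sqrt (γ / (κ * (γ + κ)))) =
    ((Nat.factorial ϖ : ℝ) * Real.Gamma ((φ : ℝ) + (n : ℝ) * γ + 1 / 2) /
        ((Nat.factorial (n + 1) : ℝ) * Real.Gamma ((n : ℝ) * γ))) *
      ∑ j ∈ Finset.range (ϖ + 1),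
        ((Nat.factorial (n - j) : ℝ) * Real.Gamma (((n - j : ℕ) : ℝ) * γ)) /
          ((Nat.factorial (ϖ - j) : ℝ) *
            Real.Gamma ((φ : ℝ) + ((n - j : ℕ) : ℝ) * γ + 1 / 2)) := by
  have hnγ : (0:ℝ) < (n:ℝ)*γ := by positivity
  -- denominator
  have hden : (∫ κ in Set.Ioi (0 : ℝ),
        (γ / (γ + κ)) ^ ((n : ℝ) * γ) * (κ / (γ + κ)) ^ φ *
          Real.sqrt (γ / (κ * (γ + κ))))
      = Real.sqrt γ * (Real.Gamma ((φ:ℝ)+1/2) * Real.Gamma ((n:ℝ)*γ)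
          / Real.Gamma ((φ:ℝ) + (n:ℝ)*γ + 1/2)) := J_eq hγ φ hnγ
  -- numerator
  have hnum : (∫ α in Set.Ioo (0 : ℝ) 1, ∫ κ in Set.Ioi (0 : ℝ),
        (α + (1 - α) * (1 + κ / γ) ^ (-γ)) ^ ϖ * (1 - α) ^ (n - ϖ) *
          (γ / (γ + κ)) ^ (((n - ϖ : ℕ) : ℝ) * γ) * (κ / (γ + κ)) ^ φ *
          Real.sqrt (γ / (κ * (γ + κ))))
      = ∑ j ∈ Finset.range (ϖ+1),
          ((ϖ.choose j : ℝ) * ((j.factorial : ℝ) * ((n-j).factorial : ℝ)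
              / ((n+1).factorial : ℝ))) *
            (Real.sqrt γ * (Real.Gamma ((φ:ℝ)+1/2) * Real.Gamma (((n-j:ℕ):ℝ)*γ)
              / Real.Gamma ((φ:ℝ) + ((n-j:ℕ):ℝ)*γ + 1/2))) := by
    have hint : ∀ j ∈ Finset.range (ϖ+1),
        IntegrableOn (fun α : ℝ => ((ϖ.choose j : ℝ) * α^j * (1-α)^(n-j)) *
            (Real.sqrt γ * (Real.Gamma ((φ:ℝ)+1/2) * Real.Gamma (((n-j:ℕ):ℝ)*γ)
              / Real.Gamma ((φ:ℝ) + ((n-j:ℕ):ℝ)*γ + 1/2)))) (Set.Ioo 0 1) := by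
      intro j hj
      have hcont : Continuous (fun α : ℝ => ((ϖ.choose j : ℝ) * α^j * (1-α)^(n-j)) *
            (Real.sqrt γ * (Real.Gamma ((φ:ℝ)+1/2) * Real.Gamma (((n-j:ℕ):ℝ)*γ)
              / Real.Gamma ((φ:ℝ) + ((n-j:ℕ):ℝ)*γ + 1/2)))) := by
        apply Continuous.mul _ continuous_const
        exact (continuous_const.mul (continuous_pow j)).mul
          ((continuous_const.sub continuous_id).pow (n-j))
      exact (hcont.continuousOn.integrableOn_compact isCompact_Icc).mono_set
        Set.Ioo_subset_Icc_self
    rw [setIntegral_congr_fun measurableSet_Ioo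
      (fun α _ => inner_eq hγ α n ϖ φ hϖ),
      MeasureTheory.integral_finset_sum _ hint]
    refine Finset.sum_congr rfl fun j hj => ?_
    have hjn : j + (n-j) + 1 = n + 1 := by
      have := Finset.mem_range.mp hj; omega
    have hfe : (fun α : ℝ => ((ϖ.choose j : ℝ) * α^j * (1-α)^(n-j)) *
          (Real.sqrt γ * (Real.Gamma ((φ:ℝ)+1/2) * Real.Gamma (((n-j:ℕ):ℝ)*γ)
            / Real.Gamma ((φ:ℝ) + ((n-j:ℕ):ℝ)*γ + 1/2))))
        = (fun α : ℝ => ((ϖ.choose j : ℝ) *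
          (Real.sqrt γ * (Real.Gamma ((φ:ℝ)+1/2) * Real.Gamma (((n-j:ℕ):ℝ)*γ)
            / Real.Gamma ((φ:ℝ) + ((n-j:ℕ):ℝ)*γ + 1/2)))) * (α^j * (1-α)^(n-j))) := by
      funext α; ring
    rw [hfe, MeasureTheory.integral_const_mul, alpha_integral, hjn]
    ring
  rw [hnum, hden]
  -- now pure algebra
  have hG1 : (0:ℝ) < Real.Gamma ((φ:ℝ)+1/2) := Real.Gamma_pos_of_pos (by positivity)
  have hGn : (0:ℝ) < Real.Gamma ((n:ℝ)*γ) := Real.Gamma_pos_of_pos hnγ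
  have hGn2 : (0:ℝ) < Real.Gamma ((φ:ℝ) + (n:ℝ)*γ + 1/2) :=
    Real.Gamma_pos_of_pos (by positivity)
  have hsγ : (0:ℝ) < Real.sqrt γ := Real.sqrt_pos.mpr hγ
  rw [div_eq_iff (by positivity), mul_assoc, Finset.sum_mul, Finset.mul_sum]
  refine Finset.sum_congr rfl fun j hj => ?_
  have hjϖ : j ≤ ϖ := Nat.lt_succ_iff.mp (Finset.mem_range.mp hj)
  have hjn : j < n := lt_of_le_of_lt hjϖ hϖ
  have hnj : 0 < n - j := by omega
  have hGj : (0:ℝ) < Real.Gamma (((n-j:ℕ):ℝ)*γ) := Real.Gamma_pos_of_pos (by positivity)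
  have hGj2 : (0:ℝ) < Real.Gamma ((φ:ℝ) + ((n-j:ℕ):ℝ)*γ + 1/2) :=
    Real.Gamma_pos_of_pos (by positivity)
  have hch : ((ϖ.choose j : ℕ) : ℝ) * (j.factorial : ℝ) * ((ϖ-j).factorial : ℝ)
      = (ϖ.factorial : ℝ) := by
    rw [← Nat.cast_mul, ← Nat.cast_mul, Nat.choose_mul_factorial_mul_factorial hjϖ]
  have hfacs : ((n+1).factorial : ℝ) ≠ 0 := Nat.cast_ne_zero.mpr (Nat.factorial_ne_zero _)
  have hfac2 : ((ϖ-j).factorial : ℝ) ≠ 0 := Nat.cast_ne_zero.mpr (Nat.factorial_ne_zero _)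
  rw [← hch]
  field_simp
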